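/- arXiv:2511.19441 — 4 statements merged into one kernel-verified Lean document; each statement's English description precedes it below -/
import Mathlib

section
/- For every smooth matrix field A : ℝ³ → M₃(ℝ), 2·vskw(curl A) = -div(S(A)), where vskw extracts the axial vector of the skew part, curl and div act column-wise, and S(A) = Aᵀ - tr(A)·I₃. -/
noncomputable section

/-- Levi-Civita symbol in three dimensions. -/
def lc (i j k : Fin 3) : ℝ :=
  if (i, j, k) = (0, 1, 2) ∨ (i, j, k) = (1, 2, 0) ∨ (i, j, k) = (2, 0, 1) then 1
  else if (i, j, k) = (0, 2, 1) ∨ (i, j, k) = (2, 1, 0) ∨ (i, j, k) = (1, 0, 2) then -1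
  else 0

/-- Partial derivative `∂ᵢ f` of a scalar field on `ℝ³`. -/
def pd (i : Fin 3) (f : (Fin 3 → ℝ) → ℝ) (x : Fin 3 → ℝ) : ℝ :=
  fderiv ℝ f x (Pi.single i 1)

/-- Curl of a vector field: `(curl v)ᵢ = εᵢⱼₖ ∂ⱼ vₖ`. -/
def vcurl (v : (Fin 3 → ℝ) → Fin 3 → ℝ) (x : Fin 3 → ℝ) (i : Fin 3) : ℝ :=
  ∑ j, ∑ k, lc i j k * pd j (fun y => v y k) x

/-- Column-wise curl of a matrix field: `(curl M)ᵢⱼ = εᵢₖₗ ∂ₖ Mₗⱼ`. -/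
def mcurl (M : (Fin 3 → ℝ) → Matrix (Fin 3) (Fin 3) ℝ) (x : Fin 3 → ℝ) :
    Matrix (Fin 3) (Fin 3) ℝ :=
  Matrix.of fun i j => ∑ k, ∑ l, lc i k l * pd k (fun y => M y l j) x

/-- Column-wise divergence of a matrix field: `(div M)ᵢ = ∂ⱼ Mⱼᵢ`. -/
def mdiv (M : (Fin 3 → ℝ) → Matrix (Fin 3) (Fin 3) ℝ) (x : Fin 3 → ℝ) (i : Fin 3) : ℝ :=
  ∑ j, pd j (fun y => M y j i) x

/-- The algebraic operator `S(A) = Aᵀ - tr(A)·I₃`. -/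
def Sop (A : Matrix (Fin 3) (Fin 3) ℝ) : Matrix (Fin 3) (Fin 3) ℝ :=
  A.transpose - A.trace • (1 : Matrix (Fin 3) (Fin 3) ℝ)

/-- `(mskw V)ᵢⱼ = -εᵢⱼₖ Vₖ`. -/
def mskw (V : Fin 3 → ℝ) : Matrix (Fin 3) (Fin 3) ℝ :=
  Matrix.of fun i j => -∑ k, lc i j k * V k

/-- `(vskw M)ᵢ = -(1/2) εᵢⱼₖ Mⱼₖ`. -/
def vskw (M : Matrix (Fin 3) (Fin 3) ℝ) : Fin 3 → ℝ :=
  fun i => -(1 / 2 : ℝ) * ∑ j, ∑ k, lc i j k * M j k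

theorem stmt_9 (A : (Fin 3 → ℝ) → Matrix (Fin 3) (Fin 3) ℝ)
    (hA : ∀ i j, ContDiff ℝ 1 fun x => A x i j) :
    ∀ (x : Fin 3 → ℝ) (i : Fin 3),
      2 * vskw (mcurl A x) i = -mdiv (fun y => Sop (A y)) x i := by
  intro x i
  have hd : ∀ l k : Fin 3, DifferentiableAt ℝ (fun y => A y l k) x :=
    fun l k => ((hA l k).differentiable one_ne_zero) x
  have key : ∀ j p : Fin 3, pd j (fun y => Sop (A y) p i) x
      = pd j (fun y => A y i p) x -
        (if p = i then (pd j (fun y => A y 0 0) x + pd j (fun y => A y 1 1) x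
          + pd j (fun y => A y 2 2) x) else 0) := by
    intro j p
    have h1 : (fun y => Sop (A y) p i)
        = fun y => A y i p - (A y 0 0 + A y 1 1 + A y 2 2) * (if p = i then (1:ℝ) else 0) := by
      funext y
      simp [Sop, Matrix.one_apply, Matrix.trace, Matrix.diag, Fin.sum_univ_three, mul_comm]
    rw [h1]
    unfold pd
    by_cases hpi : p = i
    · simp only [hpi, eq_self_iff_true, if_true, mul_one]
      rw [((hd i i).hasFDerivAt.fun_sub
        (((hd 0 0).hasFDerivAt.fun_add (hd 1 1).hasFDerivAt).fun_add (hd 2 2).hasFDerivAt)).fderiv]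
      simp [hpi]
    · simp only [if_neg hpi, mul_zero, sub_zero]
  simp only [vskw, mcurl, mdiv, Matrix.of_apply, Fin.sum_univ_three, key, neg_add_rev]
  fin_cases i <;>
    simp [lc, Fin.ext_iff, Prod.ext_iff] <;> ring

end
end

section
/- Let A : ℝ³ → M₃(ℝ) be a smooth matrix field with div A = 0 (column-wise divergence). Then div(sym(curl A)) = -curl(curl(vskw A)), where curl on matrix fields is column-wise, sym is the symmetric part, and vskw is the axial vector of the skew part. -/
noncomputable section

lemma pd_sum_mul {ι : Type*} (s : Finset ι) (c : ι → ℝ) (f : ι → (Fin 3 → ℝ) → ℝ)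
    (hf : ∀ p, Differentiable ℝ (f p)) (a : Fin 3) (x : Fin 3 → ℝ) :
    pd a (fun y => ∑ p ∈ s, c p * f p y) x = ∑ p ∈ s, c p * pd a (f p) x := by
  unfold pd
  rw [fderiv_fun_sum (fun p _ => ((hf p).const_mul (c p)).differentiableAt)]
  rw [ContinuousLinearMap.sum_apply]
  refine Finset.sum_congr rfl fun p _ => ?_
  rw [fderiv_const_mul ((hf p).differentiableAt)]
  simp

lemma pd_diff {f : (Fin 3 → ℝ) → ℝ} (hf : ContDiff ℝ 2 f) (k : Fin 3) :
    Differentiable ℝ (pd k f) := by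
  have h1 : ContDiff ℝ 1 (fderiv ℝ f) := hf.fderiv_right (by norm_num)
  have h2 : ContDiff ℝ 1 (fun y => fderiv ℝ f y (Pi.single k 1)) :=
    h1.clm_apply contDiff_const
  exact h2.differentiable one_ne_zero

lemma pd_comm {f : (Fin 3 → ℝ) → ℝ} (hf : ContDiff ℝ 2 f) (a b : Fin 3) (x : Fin 3 → ℝ) :
    pd a (pd b f) x = pd b (pd a f) x := by
  have hsymm : IsSymmSndFDerivAt ℝ f x :=
    (hf.contDiffAt).isSymmSndFDerivAt (by norm_num)
  have h1 : ContDiff ℝ 1 (fderiv ℝ f) := hf.fderiv_right (by norm_num)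
  have key' : ∀ (a : Fin 3) (v : Fin 3 → ℝ), pd a (fun y => fderiv ℝ f y v) x =
      fderiv ℝ (fderiv ℝ f) x (Pi.single a 1) v := by
    intro a v
    unfold pd
    rw [fderiv_clm_apply ((h1.differentiable one_ne_zero).differentiableAt)
      (differentiableAt_const v)]
    simp
  show pd a (fun y => fderiv ℝ f y (Pi.single b 1)) x
      = pd b (fun y => fderiv ℝ f y (Pi.single a 1)) x
  rw [key' a, key' b]
  exact hsymm _ _

lemma pd_add (f g : (Fin 3 → ℝ) → ℝ) (hf : Differentiable ℝ f) (hg : Differentiable ℝ g)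
    (a : Fin 3) (x : Fin 3 → ℝ) :
    pd a (fun y => f y + g y) x = pd a f x + pd a g x := by
  unfold pd
  rw [fderiv_fun_add hf.differentiableAt hg.differentiableAt]
  simp

lemma pd_sum2 (c : Fin 3 → Fin 3 → ℝ) (f : Fin 3 → Fin 3 → (Fin 3 → ℝ) → ℝ)
    (hf : ∀ k l, Differentiable ℝ (f k l)) (a : Fin 3) (x : Fin 3 → ℝ) :
    pd a (fun y => ∑ k, ∑ l, c k l * f k l y) x = ∑ k, ∑ l, c k l * pd a (f k l) x := by
  rw [show (fun y => ∑ k, ∑ l, c k l * f k l y)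
      = fun y => ∑ p : Fin 3 × Fin 3, c p.1 p.2 * f p.1 p.2 y from by
    funext y; rw [Fintype.sum_prod_type]]
  have h := pd_sum_mul Finset.univ (fun p : Fin 3 × Fin 3 => c p.1 p.2)
    (fun p => f p.1 p.2) (fun p => hf p.1 p.2) a x
  rw [h, Fintype.sum_prod_type]

lemma diff_sum2 (c : Fin 3 → Fin 3 → ℝ) (f : Fin 3 → Fin 3 → (Fin 3 → ℝ) → ℝ)
    (hf : ∀ k l, Differentiable ℝ (f k l)) :
    Differentiable ℝ (fun y => ∑ k, ∑ l, c k l * f k l y) := by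
  apply Differentiable.fun_sum; intro k _
  apply Differentiable.fun_sum; intro l _
  exact (hf k l).const_mul _


lemma lc_000 : lc 0 0 0 = 0 := by norm_num [lc, Prod.ext_iff, Fin.ext_iff]
lemma lc_001 : lc 0 0 1 = 0 := by norm_num [lc, Prod.ext_iff, Fin.ext_iff]
lemma lc_002 : lc 0 0 2 = 0 := by norm_num [lc, Prod.ext_iff, Fin.ext_iff]
lemma lc_010 : lc 0 1 0 = 0 := by norm_num [lc, Prod.ext_iff, Fin.ext_iff]
lemma lc_011 : lc 0 1 1 = 0 := by norm_num [lc, Prod.ext_iff, Fin.ext_iff]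
lemma lc_012 : lc 0 1 2 = 1 := by norm_num [lc, Prod.ext_iff, Fin.ext_iff]
lemma lc_020 : lc 0 2 0 = 0 := by norm_num [lc, Prod.ext_iff, Fin.ext_iff]
lemma lc_021 : lc 0 2 1 = -1 := by norm_num [lc, Prod.ext_iff, Fin.ext_iff]
lemma lc_022 : lc 0 2 2 = 0 := by norm_num [lc, Prod.ext_iff, Fin.ext_iff]
lemma lc_100 : lc 1 0 0 = 0 := by norm_num [lc, Prod.ext_iff, Fin.ext_iff]
lemma lc_101 : lc 1 0 1 = 0 := by norm_num [lc, Prod.ext_iff, Fin.ext_iff]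
lemma lc_102 : lc 1 0 2 = -1 := by norm_num [lc, Prod.ext_iff, Fin.ext_iff]
lemma lc_110 : lc 1 1 0 = 0 := by norm_num [lc, Prod.ext_iff, Fin.ext_iff]
lemma lc_111 : lc 1 1 1 = 0 := by norm_num [lc, Prod.ext_iff, Fin.ext_iff]
lemma lc_112 : lc 1 1 2 = 0 := by norm_num [lc, Prod.ext_iff, Fin.ext_iff]
lemma lc_120 : lc 1 2 0 = 1 := by norm_num [lc, Prod.ext_iff, Fin.ext_iff]
lemma lc_121 : lc 1 2 1 = 0 := by norm_num [lc, Prod.ext_iff, Fin.ext_iff]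
lemma lc_122 : lc 1 2 2 = 0 := by norm_num [lc, Prod.ext_iff, Fin.ext_iff]
lemma lc_200 : lc 2 0 0 = 0 := by norm_num [lc, Prod.ext_iff, Fin.ext_iff]
lemma lc_201 : lc 2 0 1 = 1 := by norm_num [lc, Prod.ext_iff, Fin.ext_iff]
lemma lc_202 : lc 2 0 2 = 0 := by norm_num [lc, Prod.ext_iff, Fin.ext_iff]
lemma lc_210 : lc 2 1 0 = -1 := by norm_num [lc, Prod.ext_iff, Fin.ext_iff]
lemma lc_211 : lc 2 1 1 = 0 := by norm_num [lc, Prod.ext_iff, Fin.ext_iff]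
lemma lc_212 : lc 2 1 2 = 0 := by norm_num [lc, Prod.ext_iff, Fin.ext_iff]
lemma lc_220 : lc 2 2 0 = 0 := by norm_num [lc, Prod.ext_iff, Fin.ext_iff]
lemma lc_221 : lc 2 2 1 = 0 := by norm_num [lc, Prod.ext_iff, Fin.ext_iff]
lemma lc_222 : lc 2 2 2 = 0 := by norm_num [lc, Prod.ext_iff, Fin.ext_iff]

set_option maxHeartbeats 1000000 in
lemma key_identity (D : Fin 3 → Fin 3 → Fin 3 → Fin 3 → ℝ)
    (hs : ∀ a b l j, D a b l j = D b a l j)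
    (hd : ∀ k c, ∑ j, D k j j c = 0) (i : Fin 3) :
    ∑ j, (∑ k, ∑ l, ((1/2:ℝ) * lc j k l) * D j k l i
        + ∑ k, ∑ l, ((1/2:ℝ) * lc i k l) * D j k l j)
      = -∑ p, ∑ q, lc i p q * ∑ b, ∑ c', lc q b c'
          * ∑ j, ∑ k, (-(1/2:ℝ) * lc c' j k) * D p b j k := by
  have hd' : ∀ k c, D k 0 0 c + D k 1 1 c + D k 2 2 c = 0 := by
    intro k c; simpa [Fin.sum_univ_three] using hd k c
  fin_cases i <;>
  · simp only [Fin.sum_univ_three, Fin.isValue, Fin.zero_eta, Fin.mk_one, Fin.reduceFinMk, lc_000, lc_001, lc_002, lc_010, lc_011, lc_012, lc_020, lc_021, lc_022, lc_100, lc_101, lc_102, lc_110, lc_111, lc_112, lc_120, lc_121, lc_122, lc_200, lc_201, lc_202, lc_210, lc_211, lc_212, lc_220, lc_221, lc_222, neg_mul, one_mul, mul_one,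
      neg_neg, mul_zero, zero_mul, neg_zero, add_zero, zero_add, mul_neg]
    ring_nf
    linarith [hs 0 1 0 0, hs 0 1 0 1, hs 0 1 0 2, hs 0 1 1 0, hs 0 1 1 1, hs 0 1 1 2, hs 0 1 2 0, hs 0 1 2 1, hs 0 1 2 2, hs 0 2 0 0, hs 0 2 0 1, hs 0 2 0 2, hs 0 2 1 0, hs 0 2 1 1, hs 0 2 1 2, hs 0 2 2 0, hs 0 2 2 1, hs 0 2 2 2, hs 1 2 0 0, hs 1 2 0 1, hs 1 2 0 2, hs 1 2 1 0, hs 1 2 1 1, hs 1 2 1 2, hs 1 2 2 0, hs 1 2 2 1, hs 1 2 2 2, hd' 0 0, hd' 0 1, hd' 0 2, hd' 1 0, hd' 1 1, hd' 1 2, hd' 2 0, hd' 2 1, hd' 2 2]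

theorem stmt_11 (A : (Fin 3 → ℝ) → Matrix (Fin 3) (Fin 3) ℝ)
    (hA : ∀ i j, ContDiff ℝ 2 fun x => A x i j)
    (hdiv : ∀ (x : Fin 3 → ℝ) (i : Fin 3), mdiv A x i = 0) :
    ∀ (x : Fin 3 → ℝ) (i : Fin 3),
      mdiv (fun y => (1 / 2 : ℝ) • (mcurl A y + (mcurl A y).transpose)) x i =
        -vcurl (fun y => vcurl (fun z => vskw (A z)) y) x i := by
  intro x i
  have hAd : ∀ l j, Differentiable ℝ (fun z => A z l j) :=
    fun l j => (hA l j).differentiable two_ne_zero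
  have hpdd : ∀ k l j, Differentiable ℝ (pd k (fun z => A z l j)) :=
    fun k l j => pd_diff (hA l j) k
  have hsymm : ∀ a b l j, pd a (pd b (fun z => A z l j)) x
      = pd b (pd a (fun z => A z l j)) x :=
    fun a b l j => pd_comm (hA l j) a b x
  have hdiv2 : ∀ (k c : Fin 3), ∑ j, pd k (pd j (fun z => A z j c)) x = 0 := by
    intro k c
    have h := pd_sum_mul Finset.univ (fun _ => (1:ℝ))
      (fun j => pd j (fun z => A z j c)) (fun j => hpdd j j c) k x
    have h0 : (fun y => ∑ j : Fin 3, (1:ℝ) * pd j (fun z => A z j c) y)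
        = fun _ => (0:ℝ) := by
      funext y; simpa [mdiv] using hdiv y c
    rw [h0] at h
    unfold pd at h
    simp only [fderiv_fun_const, Pi.zero_apply, ContinuousLinearMap.zero_apply, one_mul] at h
    exact h.symm
  have hL : mdiv (fun y => (1 / 2 : ℝ) • (mcurl A y + (mcurl A y).transpose)) x i
      = ∑ j, (∑ k, ∑ l, ((1/2:ℝ) * lc j k l) * pd j (pd k (fun z => A z l i)) x
           + ∑ k, ∑ l, ((1/2:ℝ) * lc i k l) * pd j (pd k (fun z => A z l j)) x) := by
    unfold mdiv
    refine Finset.sum_congr rfl fun j _ => ?_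
    have hg1 : ∀ j' i' : Fin 3, Differentiable ℝ
        (fun y => ∑ k, ∑ l, ((1/2:ℝ) * lc j' k l) * pd k (fun z => A z l i') y) :=
      fun j' i' => diff_sum2 _ _ (fun k l => hpdd k l i')
    have hrw : (fun y => ((1 / 2 : ℝ) • (mcurl A y + (mcurl A y).transpose)) j i)
        = fun y => (fun y' => ∑ k, ∑ l, ((1/2:ℝ) * lc j k l) * pd k (fun z => A z l i) y') y
            + (fun y' => ∑ k, ∑ l, ((1/2:ℝ) * lc i k l) * pd k (fun z => A z l j) y') y := by
      funext y
      simp only [mcurl, Matrix.smul_apply, Matrix.add_apply, Matrix.transpose_apply,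
        Matrix.of_apply, smul_eq_mul, mul_add, Finset.mul_sum, mul_assoc]
    rw [hrw, pd_add _ _ (hg1 j i) (hg1 i j) j x,
      pd_sum2 _ _ (fun k l => hpdd k l i) j x, pd_sum2 _ _ (fun k l => hpdd k l j) j x]
  have hvs : ∀ c' : Fin 3, (fun z => vskw (A z) c')
      = fun z => ∑ j, ∑ k, (-(1/2:ℝ) * lc c' j k) * A z j k := by
    intro c'; funext z
    simp only [vskw, Finset.mul_sum, neg_mul, Finset.sum_neg_distrib, mul_assoc]
  have hinner : ∀ b c' : Fin 3, pd b (fun z => vskw (A z) c')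
      = fun y => ∑ j, ∑ k, (-(1/2:ℝ) * lc c' j k) * pd b (fun z => A z j k) y := by
    intro b c'; funext y; rw [hvs c']
    exact pd_sum2 _ _ (fun j k => hAd j k) b y
  have hR : vcurl (fun y => vcurl (fun z => vskw (A z)) y) x i
      = ∑ p, ∑ q, lc i p q * ∑ b, ∑ c', lc q b c'
          * ∑ j, ∑ k, (-(1/2:ℝ) * lc c' j k) * pd p (pd b (fun z => A z j k)) x := by
    unfold vcurl
    refine Finset.sum_congr rfl fun p _ => Finset.sum_congr rfl fun q _ => ?_
    congr 1
    have hvc : (fun y => ∑ b, ∑ c', lc q b c' * pd b (fun z => vskw (A z) c') y)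
        = fun y => ∑ b, ∑ c', lc q b c'
            * (fun y' => ∑ j, ∑ k, (-(1/2:ℝ) * lc c' j k) * pd b (fun z => A z j k) y') y := by
      funext y
      refine Finset.sum_congr rfl fun b _ => Finset.sum_congr rfl fun c' _ => ?_
      rw [hinner b c']
    rw [hvc]
    have h2 := pd_sum2 (fun b c' => lc q b c')
      (fun b c' => fun y' => ∑ j, ∑ k, (-(1/2:ℝ) * lc c' j k) * pd b (fun z => A z j k) y')
      (fun b c' => diff_sum2 _ _ (fun j k => hpdd b j k)) p x
    rw [h2]
    refine Finset.sum_congr rfl fun b _ => Finset.sum_congr rfl fun c' _ => ?_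
    congr 1
    exact pd_sum2 _ _ (fun j k => hpdd b j k) p x
  rw [hL, hR]
  exact key_identity (fun a b l j => pd a (pd b (fun z => A z l j)) x) hsymm
    (fun k c => hdiv2 k c) i

end
end

section
/- For every smooth symmetric matrix field γ : ℝ³ → S₃(ℝ), tr(inc γ) = -divdiv(S γ), where inc is the row-wise-then-column-wise double curl, S(A) = Aᵀ - tr(A)I₃, and divdiv M = ∂ᵢ∂ⱼ Mᵢⱼ. -/
noncomputable section

/-- The incompatibility operator: row-wise curl followed by column-wise curl. -/
def inc (γ : (Fin 3 → ℝ) → Matrix (Fin 3) (Fin 3) ℝ) (x : Fin 3 → ℝ) :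
    Matrix (Fin 3) (Fin 3) ℝ :=
  mcurl (fun y => (mcurl (fun z => (γ z).transpose) y).transpose) x

/-- . -/
def divdiv (M : (Fin 3 → ℝ) → Matrix (Fin 3) (Fin 3) ℝ) (x : Fin 3 → ℝ) : ℝ :=
  ∑ i, ∑ j, pd i (fun y => pd j (fun z => M z i j) y) x

lemma contDiff_pd {f : (Fin 3 → ℝ) → ℝ} (hf : ContDiff ℝ 2 f) (j : Fin 3) :
    ContDiff ℝ 1 (pd j f) :=
  (hf.fderiv_right (m := 1) (by norm_num)).clm_apply contDiff_const

lemma pd_comb {f g0 g1 g2 : (Fin 3 → ℝ) → ℝ} {x : Fin 3 → ℝ}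
    (hf : DifferentiableAt ℝ f x) (h0 : DifferentiableAt ℝ g0 x)
    (h1 : DifferentiableAt ℝ g1 x) (h2 : DifferentiableAt ℝ g2 x) (c : ℝ) (j : Fin 3) :
    pd j (fun y => f y - c * (g0 y + g1 y + g2 y)) x
      = pd j f x - c * (pd j g0 x + pd j g1 x + pd j g2 x) := by
  have h : fderiv ℝ (fun y => f y - c * (g0 y + g1 y + g2 y)) x = _ := (hf.hasFDerivAt.sub
    ((((h0.hasFDerivAt.add h1.hasFDerivAt).add h2.hasFDerivAt)).const_mul c)).fderiv
  simp only [pd, h]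
  simp; ring

lemma pd_sum9 {F : Fin 3 → Fin 3 → (Fin 3 → ℝ) → ℝ} {x : Fin 3 → ℝ} (c : Fin 3 → Fin 3 → ℝ)
    (hF : ∀ a b, DifferentiableAt ℝ (F a b) x) (i : Fin 3) :
    pd i (fun y => ∑ a, ∑ b, c a b * F a b y) x = ∑ a, ∑ b, c a b * pd i (F a b) x := by
  have h : HasFDerivAt (fun y => ∑ a, ∑ b, c a b * F a b y)
      (∑ a, ∑ b, c a b • fderiv ℝ (F a b) x) x := by
    apply HasFDerivAt.fun_sum
    intro a _
    apply HasFDerivAt.fun_sum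
    intro b _
    exact ((hF a b).hasFDerivAt).const_mul (c a b)
  simp only [pd, h.fderiv]
  simp

theorem stmt_13 (γ : (Fin 3 → ℝ) → Matrix (Fin 3) (Fin 3) ℝ)
    (hγ : ∀ i j, ContDiff ℝ 2 fun x => γ x i j)
    (hsym : ∀ x, (γ x).transpose = γ x) :
    ∀ x : Fin 3 → ℝ, (inc γ x).trace = -divdiv (fun y => Sop (γ y)) x := by
  intro x
  have hγ1 : ∀ l b j, ContDiff ℝ 1 (pd j (fun y => γ y l b)) :=
    fun l b j => contDiff_pd (hγ l b) j
  have hγd : ∀ (l b : Fin 3), Differentiable ℝ (fun y => γ y l b) :=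
    fun l b => (hγ l b).differentiable (by norm_num)
  -- rewrite each LHS entry
  have hkey : ∀ (l i : Fin 3), (fun y => (mcurl (fun z => (γ z).transpose) y).transpose l i)
      = fun y => ∑ a, ∑ b, lc i a b * pd a (fun z => γ z l b) y := by
    intro l i; funext y
    simp [mcurl, Matrix.transpose_apply]
  have hL : ∀ i k l : Fin 3,
      pd k (fun y => (mcurl (fun z => (γ z).transpose) y).transpose l i) x
        = ∑ a, ∑ b, lc i a b * pd k (pd a fun z => γ z l b) x := by
    intro i k l
    rw [hkey l i]
    exact pd_sum9 _ (fun a b => (hγ1 l b a).differentiable one_ne_zero x) k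
  have L : (inc γ x).trace
      = ∑ i, ∑ k, ∑ l, lc i k l * ∑ a, ∑ b, lc i a b * pd k (pd a fun z => γ z l b) x := by
    show (∑ i : Fin 3, ∑ k, ∑ l,
        lc i k l * pd k (fun y => (mcurl (fun z => (γ z).transpose) y).transpose l i) x) = _
    exact Finset.sum_congr rfl fun i _ => Finset.sum_congr rfl fun k _ =>
      Finset.sum_congr rfl fun l _ => by rw [hL i k l]
  -- rewrite each RHS entry
  have hSentry : ∀ i j : Fin 3, (fun z => Sop (γ z) i j)
      = fun z => γ z j i - (1 : Matrix (Fin 3) (Fin 3) ℝ) i j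
          * (γ z 0 0 + γ z 1 1 + γ z 2 2) := by
    intro i j; funext z
    simp [Sop, Matrix.trace, Matrix.sub_apply, Matrix.smul_apply, Fin.sum_univ_three,
      Matrix.transpose_apply]
    ring
  have hR1 : ∀ i j : Fin 3, (fun y => pd j (fun z => Sop (γ z) i j) y)
      = fun y => pd j (fun z => γ z j i) y - (1 : Matrix (Fin 3) (Fin 3) ℝ) i j
          * (pd j (fun z => γ z 0 0) y + pd j (fun z => γ z 1 1) y
            + pd j (fun z => γ z 2 2) y) := by
    intro i j; funext y
    rw [hSentry i j]
    exact pd_comb (hγd j i y) (hγd 0 0 y) (hγd 1 1 y) (hγd 2 2 y) _ j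
  have hR2 : ∀ i j : Fin 3, pd i (fun y => pd j (fun z => Sop (γ z) i j) y) x
      = pd i (pd j fun z => γ z j i) x - (1 : Matrix (Fin 3) (Fin 3) ℝ) i j
          * (pd i (pd j fun z => γ z 0 0) x + pd i (pd j fun z => γ z 1 1) x
            + pd i (pd j fun z => γ z 2 2) x) := by
    intro i j
    rw [hR1 i j]
    exact pd_comb ((hγ1 j i j).differentiable one_ne_zero x)
      ((hγ1 0 0 j).differentiable one_ne_zero x) ((hγ1 1 1 j).differentiable one_ne_zero x)
      ((hγ1 2 2 j).differentiable one_ne_zero x) _ i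
  have R : divdiv (fun y => Sop (γ y)) x
      = ∑ i, ∑ j, (pd i (pd j fun z => γ z j i) x - (1 : Matrix (Fin 3) (Fin 3) ℝ) i j
          * (pd i (pd j fun z => γ z 0 0) x + pd i (pd j fun z => γ z 1 1) x
            + pd i (pd j fun z => γ z 2 2) x)) :=
    Finset.sum_congr rfl fun i _ => Finset.sum_congr rfl fun j _ => hR2 i j
  rw [L, R]
  simp only [Fin.sum_univ_three]
  norm_num [lc, Matrix.one_apply, Prod.ext_iff, Fin.ext_iff]
  ring
end
end

section
/- Let V be a finite-dimensional real inner product space, d : V → V linear with d∘d = 0, J : V → V a self-adjoint isometric involution with dJ = -Jd, and suppose the Poincaré inequality holds: there is c_p > 0 such that ‖v‖ ≤ c_p‖dv‖ for all v orthogonal to ker d. Let 𝔥 := ker d ∩ ker d* (harmonic elements) and define the bilinear form L(u,v) := ⟨Jdu, v⟩ - ⟨u, Jdv⟩. Then L is inf-sup stable on 𝔥^⊥ for the graph norm ‖v‖₁ := ‖v‖ + ‖dv‖: there exists C_L > 0 depending only on c_p such that for every u ∈ 𝔥^⊥, sup over nonzero w ∈ 𝔥^⊥ of L(u,w)/‖w‖₁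 is at least C_L‖u‖₁. One may take C_L = 1/(2·max{1,c_p²}·(1+c_p)). -/
open scoped RealInnerProductSpace


private lemma stmt_16_aux (a b s M : ℝ) (h2 : 0 ≤ a) (h3 : 0 ≤ b) (hs0 : 0 < s)
    (hM1 : 1 ≤ M) :
    (b + s * a) * (s ^ 2 * a + s * b) ≤ (s ^ 2 * a ^ 2 + b ^ 2) * (2 * M * s) := by
  nlinarith [mul_nonneg hs0.le (sq_nonneg (s * a - b)),
    mul_nonneg (mul_nonneg (sub_nonneg.mpr hM1) hs0.le)
      (add_nonneg (mul_nonneg (sq_nonneg s) (sq_nonneg a)) (sq_nonneg b))]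

theorem stmt_16 {V : Type*} [NormedAddCommGroup V] [InnerProductSpace ℝ V]
    [FiniteDimensional ℝ V]
    (d : V →ₗ[ℝ] V) (hd : d ∘ₗ d = 0)
    (J : V →ₗ[ℝ] V) (hJsa : ∀ u v : V, ⟪J u, v⟫ = ⟪u, J v⟫)
    (hJiso : ∀ v : V, ‖J v‖ = ‖v‖) (hJinv : J ∘ₗ J = LinearMap.id)
    (hanti : d ∘ₗ J = -(J ∘ₗ d))
    (cp : ℝ) (hcp : 0 < cp)
    (hpoincare : ∀ v ∈ (LinearMap.ker d)ᗮ, ‖v‖ ≤ cp * ‖d v‖) :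
    ∀ u ∈ (LinearMap.ker d ⊓ LinearMap.ker (LinearMap.adjoint d))ᗮ,
      (1 / (2 * max 1 (cp ^ 2) * (1 + cp))) * (‖u‖ + ‖d u‖) ≤
        ⨆ w : {w : V // w ∈ (LinearMap.ker d ⊓ LinearMap.ker (LinearMap.adjoint d))ᗮ ∧ w ≠ 0},
          (⟪J (d u), (w : V)⟫ - ⟪u, J (d (w : V))⟫) / (‖(w : V)‖ + ‖d (w : V)‖) := by
  classical
  intro u hu
  set K : Submodule ℝ V := LinearMap.ker d with hK
  set H : Submodule ℝ V := LinearMap.ker d ⊓ LinearMap.ker (LinearMap.adjoint d) with hH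
  have hd2 : ∀ x : V, d (d x) = 0 := fun x => by
    have := LinearMap.congr_fun hd x; simpa using this
  have hJJ : ∀ x : V, J (J x) = x := fun x => by
    have := LinearMap.congr_fun hJinv x; simpa using this
  have hdJ : ∀ x : V, d (J x) = - J (d x) := fun x => by
    have := LinearMap.congr_fun hanti x; simpa using this
  set f : {w : V // w ∈ Hᗮ ∧ w ≠ 0} → ℝ := fun w =>
    (⟪J (d u), (w : V)⟫ - ⟪u, J (d (w : V))⟫) / (‖(w : V)‖ + ‖d (w : V)‖) with hf
  -- boundedness of the sup
  have hbdd : BddAbove (Set.range f) := by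
    refine ⟨‖u‖ + ‖d u‖, ?_⟩
    rintro x ⟨⟨w, hw, hw0⟩, rfl⟩
    have hwpos : (0:ℝ) < ‖w‖ + ‖d w‖ :=
      add_pos_of_pos_of_nonneg (norm_pos_iff.mpr hw0) (norm_nonneg _)
    rw [hf]
    simp only
    rw [div_le_iff₀ hwpos]
    have h1 : ⟪J (d u), w⟫ ≤ ‖d u‖ * ‖w‖ := by
      calc ⟪J (d u), w⟫ ≤ ‖J (d u)‖ * ‖w‖ := real_inner_le_norm _ _
        _ = ‖d u‖ * ‖w‖ := by rw [hJiso]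
    have h2 : |⟪u, J (d w)⟫| ≤ ‖u‖ * ‖d w‖ := by
      calc |⟪u, J (d w)⟫| ≤ ‖u‖ * ‖J (d w)‖ := abs_real_inner_le_norm _ _
        _ = ‖u‖ * ‖d w‖ := by rw [hJiso]
    have h2' : -(‖u‖ * ‖d w‖) ≤ ⟪u, J (d w)⟫ := neg_le_of_abs_le h2
    nlinarith [norm_nonneg u, norm_nonneg (d u), norm_nonneg w, norm_nonneg (d w)]
  by_cases hu0 : u = 0
  · subst hu0
    have hz : (1 / (2 * max 1 (cp ^ 2) * (1 + cp))) * (‖(0:V)‖ + ‖d 0‖) = 0 := by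
      simp
    rw [hz]
    rcases isEmpty_or_nonempty {w : V // w ∈ Hᗮ ∧ w ≠ 0} with he | hne
    · rw [Real.iSup_of_isEmpty]
    · obtain ⟨w⟩ := hne
      have hfw : f w = 0 := by
        rw [hf]; simp
      calc (0:ℝ) = f w := hfw.symm
        _ ≤ ⨆ w, f w := le_ciSup hbdd w
  -- main case : u ≠ 0
  have hupos : 0 < ‖u‖ := norm_pos_iff.mpr hu0
  set u₁ : V := (Submodule.orthogonalProjectionOnto K u : V) with hu₁def
  have hu₁K : u₁ ∈ K := (Submodule.orthogonalProjectionOnto K u).2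
  set u₂ : V := u - u₁ with hu₂def
  have hu₂ : u₂ ∈ Kᗮ := Submodule.sub_starProjection_mem_orthogonal u
  have hHleK : H ≤ K := inf_le_left
  have hu₂H : u₂ ∈ Hᗮ := Submodule.orthogonal_le hHleK hu₂
  have hu₁H : u₁ ∈ Hᗮ := by
    have : u₁ = u - u₂ := by rw [hu₂def]; abel
    rw [this]; exact Submodule.sub_mem _ hu hu₂H
  -- elements of range d are orthogonal to H
  have hrangeH : ∀ x : V, ∀ h ∈ H, ⟪h, d x⟫ = 0 := by
    intro x h hh
    have h2 : LinearMap.adjoint d h = 0 := hh.2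
    calc ⟪h, d x⟫ = ⟪LinearMap.adjoint d h, x⟫ := (LinearMap.adjoint_inner_left d x h).symm
      _ = 0 := by rw [h2, inner_zero_left]
  -- u₁ is in the range of d
  have hu₁R : ∃ z : V, d z = u₁ := by
    have hpmem := (Submodule.orthogonalProjectionOnto (LinearMap.range d) u₁).2
    obtain ⟨z₀, hz₀⟩ := hpmem
    set p : V := (Submodule.orthogonalProjectionOnto (LinearMap.range d) u₁ : V) with hpdef
    have hr : u₁ - p ∈ (LinearMap.range d)ᗮ := Submodule.sub_starProjection_mem_orthogonal u₁
    have hpK : p ∈ K := by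
      rw [hK, LinearMap.mem_ker, ← hz₀, hd2]
    have hrk : u₁ - p ∈ K := Submodule.sub_mem _ hu₁K hpK
    have hrk' : u₁ - p ∈ LinearMap.ker (LinearMap.adjoint d) := by
      rw [LinearMap.mem_ker]
      rw [← inner_self_eq_zero (𝕜 := ℝ)]
      calc ⟪LinearMap.adjoint d (u₁ - p), LinearMap.adjoint d (u₁ - p)⟫
          = ⟪u₁ - p, d (LinearMap.adjoint d (u₁ - p))⟫ :=
            LinearMap.adjoint_inner_left d _ _
        _ = 0 := by
            rw [real_inner_comm]
            exact hr _ (LinearMap.mem_range_self d _)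
    have hrH : u₁ - p ∈ H := ⟨hrk, hrk'⟩
    have hpH : p ∈ Hᗮ := by
      rw [Submodule.mem_orthogonal]
      intro h hh
      rw [← hz₀]
      exact hrangeH z₀ h hh
    have h0 : u₁ - p = 0 := by
      have h1 : u₁ - p ∈ Hᗮ := Submodule.sub_mem _ hu₁H hpH
      rw [← inner_self_eq_zero (𝕜 := ℝ)]
      exact (Submodule.mem_orthogonal _ _).mp h1 _ hrH
    exact ⟨z₀, by rw [hz₀]; exact (sub_eq_zero.mp h0).symm⟩
  obtain ⟨z₀, hz₀⟩ := hu₁R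
  set z : V := z₀ - (Submodule.orthogonalProjectionOnto K z₀ : V) with hzdef
  have hzK : z ∈ Kᗮ := Submodule.sub_starProjection_mem_orthogonal z₀
  have hdz : d z = u₁ := by
    have hk : d ((Submodule.orthogonalProjectionOnto K z₀ : V)) = 0 := (Submodule.orthogonalProjectionOnto K z₀).2
    rw [hzdef, map_sub, hk, sub_zero, hz₀]
  set a : ℝ := ‖d u‖ with ha
  set b : ℝ := ‖u₁‖ with hb
  set s : ℝ := 1 + cp with hs
  have hs0 : 0 < s := by rw [hs]; linarith
  have hz_norm : ‖z‖ ≤ cp * b := by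
    have := hpoincare z hzK
    rwa [hdz] at this
  have hdu₂ : d u₂ = d u := by
    rw [hu₂def, map_sub, hu₁K, sub_zero]
  have hu₂norm : ‖u₂‖ ≤ cp * a := by
    have := hpoincare u₂ hu₂
    rwa [hdu₂] at this
  have hu_norm : ‖u‖ ≤ b + cp * a := by
    have he : u₁ + u₂ = u := by rw [hu₂def]; abel
    calc ‖u‖ = ‖u₁ + u₂‖ := by rw [he]
      _ ≤ ‖u₁‖ + ‖u₂‖ := norm_add_le _ _
      _ ≤ b + cp * a := by rw [hb]; linarith
  clear_value a b s
  set w : V := (s^2) • J (d u) + J z with hw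
  have hdw : d w = - J u₁ := by
    rw [hw, map_add, map_smul, hdJ, hd2, map_zero, neg_zero, smul_zero, zero_add, hdJ, hdz]
  have hinner_du_z : ⟪d u, z⟫ = 0 := by
    have hduK : d u ∈ K := by rw [hK, LinearMap.mem_ker, hd2]
    exact (Submodule.mem_orthogonal _ _).mp hzK _ hduK
  have hu₁u₂ : ⟪u₂, u₁⟫ = 0 := by
    rw [real_inner_comm]
    exact (Submodule.mem_orthogonal _ _).mp hu₂ _ hu₁K
  have huu₁ : ⟪u, u₁⟫ = b^2 := by
    have : u = u₁ + u₂ := by rw [hu₂def]; abel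
    rw [this, inner_add_left, hu₁u₂, add_zero, real_inner_self_eq_norm_sq, ← hb]
  have hLw : ⟪J (d u), w⟫ - ⟪u, J (d w)⟫ = s^2 * a^2 + b^2 := by
    have e1 : ⟪J (d u), w⟫ = s^2 * a^2 := by
      rw [hw, inner_add_right, real_inner_smul_right]
      have e11 : ⟪J (d u), J (d u)⟫ = a^2 := by
        rw [real_inner_self_eq_norm_sq, hJiso, ← ha]
      have e12 : ⟪J (d u), J z⟫ = 0 := by
        rw [hJsa, hJJ, hinner_du_z]
      rw [e11, e12, add_zero]
    have e2 : ⟪u, J (d w)⟫ = - b^2 := by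
      rw [hdw, map_neg, hJJ, inner_neg_right, huu₁]
    rw [e1, e2]; ring
  have hab : 0 < s^2 * a^2 + b^2 := by
    have h1 : 0 < b + cp * a := lt_of_lt_of_le hupos hu_norm
    have h2 : 0 ≤ a := by rw [ha]; exact norm_nonneg _
    have h3 : 0 ≤ b := by rw [hb]; exact norm_nonneg _
    have hor : 0 < a ∨ 0 < b := by
      by_contra hcon
      push_neg at hcon
      have ha0 : a = 0 := le_antisymm hcon.1 h2
      have hb0 : b = 0 := le_antisymm hcon.2 h3
      rw [ha0, hb0] at h1; linarith
    rcases hor with hpa | hpb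
    · have hq : 0 < s^2 * a^2 := mul_pos (pow_pos hs0 2) (pow_pos hpa 2)
      linarith [sq_nonneg b]
    · have hq : 0 < b^2 := pow_pos hpb 2
      have hq2 : 0 ≤ s^2 * a^2 := mul_nonneg (sq_nonneg s) (sq_nonneg a)
      linarith
  have hwH : w ∈ Hᗮ := by
    rw [Submodule.mem_orthogonal]
    intro h hh
    have hJh : J h ∈ H := by
      constructor
      · show d (J h) = 0
        rw [hdJ]
        have : d h = 0 := hh.1
        rw [this, map_zero, neg_zero]
      · show LinearMap.adjoint d (J h) = 0
        rw [← inner_self_eq_zero (𝕜 := ℝ)]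
        have hh2 : LinearMap.adjoint d h = 0 := hh.2
        calc ⟪LinearMap.adjoint d (J h), LinearMap.adjoint d (J h)⟫
            = ⟪J h, d (LinearMap.adjoint d (J h))⟫ := LinearMap.adjoint_inner_left d _ _
          _ = ⟪h, J (d (LinearMap.adjoint d (J h)))⟫ := hJsa _ _
          _ = ⟪h, - d (J (LinearMap.adjoint d (J h)))⟫ := by
              rw [hdJ, neg_neg]
          _ = - ⟪h, d (J (LinearMap.adjoint d (J h)))⟫ := inner_neg_right _ _
          _ = - ⟪LinearMap.adjoint d h, J (LinearMap.adjoint d (J h))⟫ := by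
              rw [LinearMap.adjoint_inner_left]
          _ = 0 := by rw [hh2, inner_zero_left, neg_zero]
    rw [hw, inner_add_right, real_inner_smul_right]
    have t1 : ⟪h, J (d u)⟫ = 0 := by
      rw [← hJsa]
      calc ⟪J h, d u⟫ = ⟪LinearMap.adjoint d (J h), u⟫ := (LinearMap.adjoint_inner_left d _ _).symm
        _ = 0 := by rw [hJh.2, inner_zero_left]
    have t2 : ⟪h, J z⟫ = 0 := by
      rw [← hJsa]
      exact (Submodule.mem_orthogonal _ _).mp hzK _ hJh.1
    rw [t1, t2, mul_zero, add_zero]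
  have hw0 : w ≠ 0 := by
    intro h
    rw [h] at hLw
    simp only [inner_zero_right, map_zero, inner_zero_right, sub_zero] at hLw
    linarith [hab, hLw.symm.le, hLw.le]
  have hndw : ‖d w‖ = b := by rw [hdw, norm_neg, hJiso, ← hb]
  have hnormw : ‖w‖ ≤ s^2 * a + cp * b := by
    rw [hw]
    calc ‖(s^2) • J (d u) + J z‖ ≤ ‖(s^2) • J (d u)‖ + ‖J z‖ := norm_add_le _ _
      _ = s^2 * a + ‖z‖ := by
          rw [norm_smul, hJiso, hJiso, ← ha]
          congr 1
          rw [Real.norm_eq_abs, abs_of_pos (by positivity : (0:ℝ) < s^2)]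
      _ ≤ s^2 * a + cp * b := by linarith
  clear_value w
  set N : ℝ := ‖w‖ + ‖d w‖ with hN
  have hNpos : 0 < N := add_pos_of_pos_of_nonneg (norm_pos_iff.mpr hw0) (norm_nonneg _)
  clear_value N
  have hNle : N ≤ s^2 * a + s * b := by
    have hsb : s * b = b + cp * b := by rw [hs]; ring
    rw [hN, hndw]; linarith [hnormw]
  set M : ℝ := max 1 (cp^2) with hM
  have hM1 : (1:ℝ) ≤ M := le_max_left _ _
  clear_value M
  have hMpos : 0 < 2 * M * s := by
    have hM0 : (0:ℝ) < M := lt_of_lt_of_le one_pos hM1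
    positivity
  have key : (1 / (2 * M * s)) * (‖u‖ + a) ≤ (s^2 * a^2 + b^2) / N := by
    rw [one_div_mul_eq_div, div_le_div_iff₀ hMpos hNpos]
    have h2 : 0 ≤ a := by rw [ha]; exact norm_nonneg _
    have h3 : 0 ≤ b := by rw [hb]; exact norm_nonneg _
    have hXb : ‖u‖ + a ≤ b + s * a := by
      have hsa : s * a = a + cp * a := by rw [hs]; ring
      linarith [hu_norm]
    have hXN : (‖u‖ + a) * N ≤ (b + s * a) * (s^2 * a + s * b) := by
      apply mul_le_mul hXb hNle (le_of_lt hNpos)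
      exact add_nonneg h3 (mul_nonneg hs0.le h2)
    have hfin : (b + s * a) * (s^2 * a + s * b) ≤ (s^2 * a^2 + b^2) * (2 * M * s) :=
      stmt_16_aux a b s M h2 h3 hs0 hM1
    linarith
  have hsup : (s^2 * a^2 + b^2) / N ≤ ⨆ w, f w := by
    have : f ⟨w, hwH, hw0⟩ = (s^2 * a^2 + b^2) / N := by
      show (⟪J (d u), w⟫ - ⟪u, J (d w)⟫) / (‖w‖ + ‖d w‖) = _
      rw [hLw, hN]
    rw [← this]
    exact le_ciSup hbdd _
  calc (1 / (2 * M * s)) * (‖u‖ + a) ≤ (s^2 * a^2 + b^2) / N := key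
    _ ≤ ⨆ w, f w := hsup
end
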